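/- In the class C₀ of finite clique structures (maximal cliques pairwise intersecting in fewer than s points), the standard amalgam D of A₁ and A₂ over a common induced substructure B = A₁ ∩ A₂ satisfies λ(D/A₁) = λ(A₂/B), where λ(X/Y) = λ(X ∪ Y) - λ(Y). -/
import Mathlib


/-- The standard amalgam `D` of clique structures `A₁, A₂ ∈ C₀` over the common induced
substructure `B = A₁ ∩ A₂` satisfies `λ(D/A₁) = λ(A₂/B)`. -/
theorem stmt_9 {α : Type*} [DecidableEq α] (r s : ℕ) (hr : 1 ≤ r) (hs : 2 ≤ s)
    (A₁ A₂ : Finset α) (M₁ M₂ : Finset (Finset (Fin r → α)))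
    (h₁sub : ∀ K ∈ M₁, ∀ x ∈ K, ∀ i, x i ∈ A₁)
    (h₂sub : ∀ K ∈ M₂, ∀ x ∈ K, ∀ i, x i ∈ A₂)
    (h₁size : ∀ K ∈ M₁, s ≤ K.card) (h₂size : ∀ K ∈ M₂, s ≤ K.card)
    (h₁int : ∀ K₁ ∈ M₁, ∀ K₂ ∈ M₁, K₁ ≠ K₂ → (K₁ ∩ K₂).card < s)
    (h₂int : ∀ K₁ ∈ M₂, ∀ K₂ ∈ M₂, K₁ ≠ K₂ → (K₁ ∩ K₂).card < s)
    -- the induced clique structure of a family `N` on a subset `X`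
    (ind : Finset (Finset (Fin r → α)) → Finset α → Finset (Finset (Fin r → α)))
    (hind : ∀ N X, ind N X =
      (N.image fun K => K.filter fun x => ∀ i, x i ∈ X).filter fun K => s ≤ K.card)
    -- `B = A₁ ∩ A₂` is a common induced substructure
    (hcommon : ind M₁ (A₁ ∩ A₂) = ind M₂ (A₁ ∩ A₂))
    -- the predimension of a structure with universe `X` and maximal cliques `N`
    (lam : Finset (Finset (Fin r → α)) → Finset α → ℤ)
    (hlam : ∀ N X, lam N X = (X.card : ℤ) - ∑ K ∈ N, max 0 ((K.card : ℤ) - ((s : ℤ) - 1)))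
    -- the maximal cliques of the standard amalgam
    (MD : Finset (Finset (Fin r → α)))
    (hMD : MD = ((M₁ ∪ M₂).filter fun K =>
        (K.filter fun x => ∀ i, x i ∈ A₁ ∩ A₂).card < s) ∪
      (((M₁ ×ˢ M₂).filter fun p => s ≤ (p.1 ∩ p.2).card).image fun p => p.1 ∪ p.2)) :
    lam MD (A₁ ∪ A₂) - lam M₁ A₁ = lam M₂ A₂ - lam (ind M₂ (A₁ ∩ A₂)) (A₁ ∩ A₂) := by
  classical
  subst hMD
  -- notation
  set P : Finset (Finset (Fin r → α) × Finset (Fin r → α)) :=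
    (M₁ ×ˢ M₂).filter fun p => s ≤ (p.1 ∩ p.2).card with hP
  -- trace lemmas
  have htr_sub : ∀ K : Finset (Fin r → α),
      (K.filter fun x => ∀ i, x i ∈ A₁ ∩ A₂) ⊆ K := fun K => Finset.filter_subset _ _
  have hint_tr₁ : ∀ K₁ ∈ M₁, ∀ K₂ ∈ M₂,
      K₁ ∩ K₂ ⊆ K₁.filter fun x => ∀ i, x i ∈ A₁ ∩ A₂ := by
    intro K₁ h₁ K₂ h₂ x hx
    rw [Finset.mem_inter] at hx
    rw [Finset.mem_filter]
    exact ⟨hx.1, fun i => Finset.mem_inter.2 ⟨h₁sub K₁ h₁ x hx.1 i, h₂sub K₂ h₂ x hx.2 i⟩⟩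
  have hint_tr₂ : ∀ K₁ ∈ M₁, ∀ K₂ ∈ M₂,
      K₁ ∩ K₂ ⊆ K₂.filter fun x => ∀ i, x i ∈ A₁ ∩ A₂ := by
    intro K₁ h₁ K₂ h₂ x hx
    rw [Finset.mem_inter] at hx
    rw [Finset.mem_filter]
    exact ⟨hx.2, fun i => Finset.mem_inter.2 ⟨h₁sub K₁ h₁ x hx.1 i, h₂sub K₂ h₂ x hx.2 i⟩⟩
  -- matching lemmas via hcommon
  have hmatch₂ : ∀ K ∈ M₁, s ≤ (K.filter fun x => ∀ i, x i ∈ A₁ ∩ A₂).card →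
      ∃ K₂ ∈ M₂, (K₂.filter fun x => ∀ i, x i ∈ A₁ ∩ A₂)
        = K.filter fun x => ∀ i, x i ∈ A₁ ∩ A₂ := by
    intro K hK hcard
    have hmem : (K.filter fun x => ∀ i, x i ∈ A₁ ∩ A₂) ∈ ind M₂ (A₁ ∩ A₂) := by
      rw [← hcommon, hind, Finset.mem_filter]
      exact ⟨Finset.mem_image.2 ⟨K, hK, rfl⟩, hcard⟩
    rw [hind, Finset.mem_filter, Finset.mem_image] at hmem
    obtain ⟨⟨K₂, hK₂, heq⟩, -⟩ := hmem
    exact ⟨K₂, hK₂, heq⟩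
  have hmatch₁ : ∀ K ∈ M₂, s ≤ (K.filter fun x => ∀ i, x i ∈ A₁ ∩ A₂).card →
      ∃ K₁ ∈ M₁, (K₁.filter fun x => ∀ i, x i ∈ A₁ ∩ A₂)
        = K.filter fun x => ∀ i, x i ∈ A₁ ∩ A₂ := by
    intro K hK hcard
    have hmem : (K.filter fun x => ∀ i, x i ∈ A₁ ∩ A₂) ∈ ind M₁ (A₁ ∩ A₂) := by
      rw [hcommon, hind, Finset.mem_filter]
      exact ⟨Finset.mem_image.2 ⟨K, hK, rfl⟩, hcard⟩
    rw [hind, Finset.mem_filter, Finset.mem_image] at hmem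
    obtain ⟨⟨K₁, hK₁, heq⟩, -⟩ := hmem
    exact ⟨K₁, hK₁, heq⟩
  -- key: for pairs with big intersection, the intersection equals both traces
  have hkey : ∀ K₁ ∈ M₁, ∀ K₂ ∈ M₂, s ≤ (K₁ ∩ K₂).card →
      K₁ ∩ K₂ = (K₁.filter fun x => ∀ i, x i ∈ A₁ ∩ A₂) ∧
      K₁ ∩ K₂ = (K₂.filter fun x => ∀ i, x i ∈ A₁ ∩ A₂) := by
    intro K₁ h₁ K₂ h₂ hcard
    have hsub2 := hint_tr₂ K₁ h₁ K₂ h₂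
    have hcard2 : s ≤ (K₂.filter fun x => ∀ i, x i ∈ A₁ ∩ A₂).card :=
      le_trans hcard (Finset.card_le_card hsub2)
    obtain ⟨K₁', hK₁', htr'⟩ := hmatch₁ K₂ h₂ hcard2
    have hK₁eq : K₁' = K₁ := by
      by_contra hne
      have hsub : K₁ ∩ K₂ ⊆ K₁ ∩ K₁' := by
        refine Finset.subset_inter Finset.inter_subset_left ?_
        intro x hx
        exact htr_sub K₁' (htr'.symm ▸ hsub2 hx)
      exact absurd (le_trans hcard (Finset.card_le_card hsub))
        (not_le.2 (h₁int K₁ h₁ K₁' hK₁' (Ne.symm hne)))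
    subst hK₁eq
    have hsub' : (K₂.filter fun x => ∀ i, x i ∈ A₁ ∩ A₂) ⊆ K₁' ∩ K₂ :=
      Finset.subset_inter (fun x hx => htr_sub K₁' (htr' ▸ hx)) (htr_sub K₂)
    have h2 : K₁' ∩ K₂ = (K₂.filter fun x => ∀ i, x i ∈ A₁ ∩ A₂) :=
      Finset.Subset.antisymm hsub2 hsub'
    exact ⟨h2.trans htr'.symm, h2⟩
  -- uniqueness lemmas
  have huniq₂ : ∀ K₁ ∈ M₁, ∀ K₂ ∈ M₂, ∀ K₂' ∈ M₂, s ≤ (K₁ ∩ K₂).card →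
      s ≤ (K₁ ∩ K₂').card → K₂ = K₂' := by
    intro K₁ h₁ K₂ h₂ K₂' h₂' hc hc'
    by_contra hne
    have e1 := (hkey K₁ h₁ K₂ h₂ hc).1
    have e2 := (hkey K₁ h₁ K₂' h₂' hc').1
    have hsub : K₁ ∩ K₂ ⊆ K₂ ∩ K₂' :=
      Finset.subset_inter Finset.inter_subset_right
        (by rw [e1, ← e2]; exact Finset.inter_subset_right)
    exact absurd (le_trans hc (Finset.card_le_card hsub))
      (not_le.2 (h₂int K₂ h₂ K₂' h₂' hne))
  have huniq₁ : ∀ K₂ ∈ M₂, ∀ K₁ ∈ M₁, ∀ K₁' ∈ M₁, s ≤ (K₁ ∩ K₂).card →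
      s ≤ (K₁' ∩ K₂).card → K₁ = K₁' := by
    intro K₂ h₂ K₁ h₁ K₁' h₁' hc hc'
    by_contra hne
    have e1 := (hkey K₁ h₁ K₂ h₂ hc).2
    have e2 := (hkey K₁' h₁' K₂ h₂ hc').2
    have hsub : K₁ ∩ K₂ ⊆ K₁ ∩ K₁' :=
      Finset.subset_inter Finset.inter_subset_left
        (by rw [e1, ← e2]; exact Finset.inter_subset_left)
    exact absurd (le_trans hc (Finset.card_le_card hsub))
      (not_le.2 (h₁int K₁ h₁ K₁' h₁' hne))
  -- recovering components from the union
  have hfilter₁ : ∀ p ∈ P, (p.1 ∪ p.2).filter (fun x => ∀ i, x i ∈ A₁) = p.1 := by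
    intro p hp
    rw [hP, Finset.mem_filter, Finset.mem_product] at hp
    obtain ⟨⟨h₁, h₂⟩, hc⟩ := hp
    ext x
    simp only [Finset.mem_filter, Finset.mem_union]
    constructor
    · rintro ⟨hx | hx, hA⟩
      · exact hx
      · have : x ∈ p.1 ∩ p.2 := by
          rw [(hkey p.1 h₁ p.2 h₂ hc).2, Finset.mem_filter]
          exact ⟨hx, fun i => Finset.mem_inter.2 ⟨hA i, h₂sub p.2 h₂ x hx i⟩⟩
        exact (Finset.mem_inter.1 this).1
    · intro hx
      exact ⟨Or.inl hx, fun i => h₁sub p.1 h₁ x hx i⟩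
  have hfilter₂ : ∀ p ∈ P, (p.1 ∪ p.2).filter (fun x => ∀ i, x i ∈ A₂) = p.2 := by
    intro p hp
    rw [hP, Finset.mem_filter, Finset.mem_product] at hp
    obtain ⟨⟨h₁, h₂⟩, hc⟩ := hp
    ext x
    simp only [Finset.mem_filter, Finset.mem_union]
    constructor
    · rintro ⟨hx | hx, hA⟩
      · have : x ∈ p.1 ∩ p.2 := by
          rw [(hkey p.1 h₁ p.2 h₂ hc).1, Finset.mem_filter]
          exact ⟨hx, fun i => Finset.mem_inter.2 ⟨h₁sub p.1 h₁ x hx i, hA i⟩⟩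
        exact (Finset.mem_inter.1 this).2
      · exact hx
    · intro hx
      exact ⟨Or.inr hx, fun i => h₂sub p.2 h₂ x hx i⟩
  -- cardinality identity
  have hcard : ((A₁ ∪ A₂).card : ℤ) + ((A₁ ∩ A₂).card : ℤ)
      = (A₁.card : ℤ) + (A₂.card : ℤ) := by
    exact_mod_cast congrArg (Nat.cast : ℕ → ℤ) (Finset.card_union_add_card_inter A₁ A₂)
  -- the weight function
  set g : Finset (Fin r → α) → ℤ := fun K => max 0 ((K.card : ℤ) - ((s : ℤ) - 1)) with hg
  have hgval : ∀ K : Finset (Fin r → α), s ≤ K.card → g K = (K.card : ℤ) - ((s : ℤ) - 1) := by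
    intro K hK
    rw [hg]
    have : (0 : ℤ) ≤ (K.card : ℤ) - ((s : ℤ) - 1) := by
      have : (s : ℤ) ≤ (K.card : ℤ) := by exact_mod_cast hK
      linarith
    exact max_eq_right this
  -- disjointness of the two parts of MD
  have hdisj : Disjoint
      ((M₁ ∪ M₂).filter fun K => (K.filter fun x => ∀ i, x i ∈ A₁ ∩ A₂).card < s)
      (P.image fun p => p.1 ∪ p.2) := by
    rw [Finset.disjoint_left]
    intro K hK hK'
    rw [Finset.mem_filter] at hK
    obtain ⟨p, hp, hpe⟩ := Finset.mem_image.1 hK'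
    have hpP := hp
    rw [hP, Finset.mem_filter, Finset.mem_product] at hpP
    obtain ⟨⟨h₁, h₂⟩, hc⟩ := hpP
    have hsub : p.1 ∩ p.2 ⊆ K.filter fun x => ∀ i, x i ∈ A₁ ∩ A₂ := by
      intro x hx
      have hx' := hint_tr₁ p.1 h₁ p.2 h₂ hx
      rw [Finset.mem_filter] at hx' ⊢
      exact ⟨hpe ▸ Finset.mem_union.2 (Or.inl hx'.1), hx'.2⟩
    exact absurd (le_trans hc (Finset.card_le_card hsub)) (not_le.2 hK.2)
  -- disjointness of the filters of M₁ and M₂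
  have hdisj' : Disjoint
      (M₁.filter fun K => (K.filter fun x => ∀ i, x i ∈ A₁ ∩ A₂).card < s)
      (M₂.filter fun K => (K.filter fun x => ∀ i, x i ∈ A₁ ∩ A₂).card < s) := by
    rw [Finset.disjoint_left]
    intro K hK hK'
    rw [Finset.mem_filter] at hK hK'
    have : (K.filter fun x => ∀ i, x i ∈ A₁ ∩ A₂) = K := by
      apply Finset.filter_true_of_mem
      intro x hx i
      exact Finset.mem_inter.2 ⟨h₁sub K hK.1 x hx i, h₂sub K hK'.1 x hx i⟩
    rw [this] at hK
    exact absurd (h₁size K hK.1) (not_le.2 hK.2)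
  -- injectivity of the union map on P
  have hinj : ∀ p ∈ P, ∀ q ∈ P, p.1 ∪ p.2 = q.1 ∪ q.2 → p = q := by
    intro p hp q hq h
    have h1 : p.1 = q.1 := by rw [← hfilter₁ p hp, ← hfilter₁ q hq, h]
    have h2 : p.2 = q.2 := by rw [← hfilter₂ p hp, ← hfilter₂ q hq, h]
    exact Prod.ext h1 h2
  -- termwise identity on P
  have hterm : ∀ p ∈ P, g (p.1 ∪ p.2) = g p.1 + g p.2 - g (p.1 ∩ p.2) := by
    intro p hp
    rw [hP, Finset.mem_filter, Finset.mem_product] at hp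
    obtain ⟨⟨h₁, h₂⟩, hc⟩ := hp
    have hu : s ≤ (p.1 ∪ p.2).card :=
      le_trans (h₁size p.1 h₁) (Finset.card_le_card Finset.subset_union_left)
    have hie : (p.1 ∪ p.2).card + (p.1 ∩ p.2).card = p.1.card + p.2.card :=
      Finset.card_union_add_card_inter p.1 p.2
    rw [hgval _ hu, hgval _ (h₁size p.1 h₁), hgval _ (h₂size p.2 h₂), hgval _ hc]
    have : ((p.1 ∪ p.2).card : ℤ) + ((p.1 ∩ p.2).card : ℤ)
        = (p.1.card : ℤ) + (p.2.card : ℤ) := by exact_mod_cast congrArg (Nat.cast : ℕ → ℤ) hie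
    linarith
  -- bijection 1 : first projection
  have hb1 : ∑ p ∈ P, g p.1
      = ∑ K ∈ M₁.filter fun K => ¬ (K.filter fun x => ∀ i, x i ∈ A₁ ∩ A₂).card < s, g K := by
    refine Finset.sum_bij (fun p _ => p.1) ?_ ?_ ?_ ?_
    · intro p hp
      rw [hP, Finset.mem_filter, Finset.mem_product] at hp
      obtain ⟨⟨h₁, h₂⟩, hc⟩ := hp
      rw [Finset.mem_filter]
      refine ⟨h₁, not_lt.2 (le_trans hc (Finset.card_le_card (hint_tr₁ p.1 h₁ p.2 h₂)))⟩
    · intro p hp q hq h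
      have h' : p.1 = q.1 := h
      have hpP := hp; have hqP := hq
      rw [hP, Finset.mem_filter, Finset.mem_product] at hpP hqP
      have h2 : p.2 = q.2 := by
        refine huniq₂ p.1 hpP.1.1 p.2 hpP.1.2 q.2 hqP.1.2 hpP.2 ?_
        rw [h']; exact hqP.2
      exact Prod.ext h' h2
    · intro K hK
      rw [Finset.mem_filter, not_lt] at hK
      obtain ⟨K₂, hK₂, htr⟩ := hmatch₂ K hK.1 hK.2
      have hc : s ≤ (K ∩ K₂).card := by
        refine le_trans hK.2 (Finset.card_le_card ?_)
        refine Finset.subset_inter (htr_sub K) ?_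
        intro x hx; exact htr_sub K₂ (htr.symm ▸ hx)
      refine ⟨(K, K₂), ?_, rfl⟩
      rw [hP, Finset.mem_filter, Finset.mem_product]
      exact ⟨⟨hK.1, hK₂⟩, hc⟩
    · intro p hp; rfl
  -- bijection 2 : second projection
  have hb2 : ∑ p ∈ P, g p.2
      = ∑ K ∈ M₂.filter fun K => ¬ (K.filter fun x => ∀ i, x i ∈ A₁ ∩ A₂).card < s, g K := by
    refine Finset.sum_bij (fun p _ => p.2) ?_ ?_ ?_ ?_
    · intro p hp
      rw [hP, Finset.mem_filter, Finset.mem_product] at hp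
      obtain ⟨⟨h₁, h₂⟩, hc⟩ := hp
      rw [Finset.mem_filter]
      refine ⟨h₂, not_lt.2 (le_trans hc (Finset.card_le_card (hint_tr₂ p.1 h₁ p.2 h₂)))⟩
    · intro p hp q hq h
      have h' : p.2 = q.2 := h
      have hpP := hp; have hqP := hq
      rw [hP, Finset.mem_filter, Finset.mem_product] at hpP hqP
      have h1 : p.1 = q.1 := by
        refine huniq₁ p.2 hpP.1.2 p.1 hpP.1.1 q.1 hqP.1.1 hpP.2 ?_
        rw [h']; exact hqP.2
      exact Prod.ext h1 h'
    · intro K hK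
      rw [Finset.mem_filter, not_lt] at hK
      obtain ⟨K₁, hK₁, htr⟩ := hmatch₁ K hK.1 hK.2
      have hc : s ≤ (K₁ ∩ K).card := by
        refine le_trans hK.2 (Finset.card_le_card ?_)
        refine Finset.subset_inter ?_ (htr_sub K)
        intro x hx; exact htr_sub K₁ (htr ▸ hx)
      refine ⟨(K₁, K), ?_, rfl⟩
      rw [hP, Finset.mem_filter, Finset.mem_product]
      exact ⟨⟨hK₁, hK.1⟩, hc⟩
    · intro p hp; rfl
  -- bijection 3 : intersection onto the induced structure
  have hb3 : ∑ p ∈ P, g (p.1 ∩ p.2) = ∑ L ∈ ind M₂ (A₁ ∩ A₂), g L := by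
    refine Finset.sum_bij (fun p _ => p.1 ∩ p.2) ?_ ?_ ?_ ?_
    · intro p hp
      rw [hP, Finset.mem_filter, Finset.mem_product] at hp
      obtain ⟨⟨h₁, h₂⟩, hc⟩ := hp
      rw [hind, Finset.mem_filter]
      constructor
      · exact Finset.mem_image.2 ⟨p.2, h₂, ((hkey p.1 h₁ p.2 h₂ hc).2).symm⟩
      · exact hc
    · intro p hp q hq h
      have h' : p.1 ∩ p.2 = q.1 ∩ q.2 := h
      have hpP := hp; have hqP := hq
      rw [hP, Finset.mem_filter, Finset.mem_product] at hpP hqP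
      have h2 : p.2 = q.2 := by
        by_contra hne
        have hsub : p.1 ∩ p.2 ⊆ p.2 ∩ q.2 := by
          refine Finset.subset_inter Finset.inter_subset_right ?_
          rw [h']; exact Finset.inter_subset_right
        exact absurd (le_trans hpP.2 (Finset.card_le_card hsub))
          (not_le.2 (h₂int p.2 hpP.1.2 q.2 hqP.1.2 hne))
      have h1 : p.1 = q.1 := by
        refine huniq₁ p.2 hpP.1.2 p.1 hpP.1.1 q.1 hqP.1.1 hpP.2 ?_
        rw [h2]; exact hqP.2
      exact Prod.ext h1 h2
    · intro L hL
      rw [hind, Finset.mem_filter, Finset.mem_image] at hL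
      obtain ⟨⟨K₂, hK₂, hLe⟩, hLc⟩ := hL
      have hcard2 : s ≤ (K₂.filter fun x => ∀ i, x i ∈ A₁ ∩ A₂).card := by
        rw [hLe]; exact hLc
      obtain ⟨K₁, hK₁, htr⟩ := hmatch₁ K₂ hK₂ hcard2
      have hc : s ≤ (K₁ ∩ K₂).card := by
        refine le_trans hcard2 (Finset.card_le_card ?_)
        refine Finset.subset_inter ?_ (htr_sub K₂)
        intro x hx; exact htr_sub K₁ (htr ▸ hx)
      refine ⟨(K₁, K₂), ?_, ?_⟩
      · rw [hP, Finset.mem_filter, Finset.mem_product]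
        exact ⟨⟨hK₁, hK₂⟩, hc⟩
      · show K₁ ∩ K₂ = L
        rw [(hkey K₁ hK₁ K₂ hK₂ hc).2]; exact hLe
    · intro p hp; rfl
  -- assemble
  have hsplit₁ : ∑ K ∈ M₁, g K
      = ∑ K ∈ M₁.filter (fun K => (K.filter fun x => ∀ i, x i ∈ A₁ ∩ A₂).card < s), g K
        + ∑ K ∈ M₁.filter (fun K => ¬ (K.filter fun x => ∀ i, x i ∈ A₁ ∩ A₂).card < s), g K :=
    (Finset.sum_filter_add_sum_filter_not M₁ _ g).symm
  have hsplit₂ : ∑ K ∈ M₂, g K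
      = ∑ K ∈ M₂.filter (fun K => (K.filter fun x => ∀ i, x i ∈ A₁ ∩ A₂).card < s), g K
        + ∑ K ∈ M₂.filter (fun K => ¬ (K.filter fun x => ∀ i, x i ∈ A₁ ∩ A₂).card < s), g K :=
    (Finset.sum_filter_add_sum_filter_not M₂ _ g).symm
  rw [hlam, hlam, hlam, hlam]
  rw [Finset.sum_union hdisj, Finset.filter_union, Finset.sum_union hdisj',
    Finset.sum_image hinj, Finset.sum_congr rfl hterm]
  rw [Finset.sum_sub_distrib, Finset.sum_add_distrib, hb1, hb2, hb3]
  linarith [hcard, hsplit₁, hsplit₂]
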